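/- In the category of compactly generated weak Hausdorff spaces, the pushout of a diagram X ← A → B in which A → B is a closed embedding, computed in the category of all topological spaces, is already weak Hausdorff (and compactly generated), hence agrees with the pushout computed in CGWH spaces. -/

import Mathlib

open CategoryTheory Limits Topology

set_option synthInstance.maxHeartbeats 800000

/-- A space is weak Hausdorff if images of maps from compact Hausdorff spaces
are closed. -/
def IsWeakHausdorff (X : Type) [TopologicalSpace X] : Prop :=
  ∀ (K : Type) (_ : TopologicalSpace K), CompactSpace K → T2Space K →
    ∀ u : C(K, X), IsClosed (Set.range u)

/-- A space is compactly generated if a set is closed as soon as its preimage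
under every map from a compact Hausdorff space is closed. -/
def IsCompactlyGeneratedSpace (X : Type) [TopologicalSpace X] : Prop :=
  ∀ s : Set X,
    (∀ (K : Type) (_ : TopologicalSpace K), CompactSpace K → T2Space K →
      ∀ u : C(K, X), IsClosed (u ⁻¹' s)) →
    IsClosed s

/-- The pushout of `X ← A → B`, computed in the category of all topological spaces:
the quotient of `X ⊔ B` identifying `f a` with `i a`. -/
def PushoutSpace {A X B : Type} [TopologicalSpace A] [TopologicalSpace X]
    [TopologicalSpace B] (f : C(A, X)) (i : C(A, B)) : Type :=
  Quot (fun u v : X ⊕ B => ∃ a : A, u = Sum.inl (f a) ∧ v = Sum.inr (i a))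

instance {A X B : Type} [TopologicalSpace A] [TopologicalSpace X] [TopologicalSpace B]
    (f : C(A, X)) (i : C(A, B)) : TopologicalSpace (PushoutSpace f i) :=
  instTopologicalSpaceQuot

section WH

variable {X : Type} [TopologicalSpace X]

lemma wh_singleton (hX : IsWeakHausdorff X) (x : X) : IsClosed ({x} : Set X) := by
  have h := hX Unit inferInstance inferInstance inferInstance (ContinuousMap.const Unit x)
  simpa [ContinuousMap.const, Set.range_const] using h

lemma wh_image_closed (hX : IsWeakHausdorff X) {K : Type} [TopologicalSpace K]
    [CompactSpace K] [T2Space K] {g : K → X} (hg : Continuous g) {C : Set K}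
    (hC : IsClosed C) : IsClosed (g '' C) := by
  have : CompactSpace C := isCompact_iff_compactSpace.mp hC.isCompact
  have h := hX C inferInstance inferInstance inferInstance
    ⟨fun c => g c, hg.comp continuous_subtype_val⟩
  rw [Set.image_eq_range]
  exact h

/-- Core separation lemma: in a weak Hausdorff space, any two distinct points can be
separated by open sets relatively to the image of any compact Hausdorff probe. -/
lemma wh_sep (hX : IsWeakHausdorff X) {K : Type} [TopologicalSpace K]
    [CompactSpace K] [T2Space K] {g : K → X} (hg : Continuous g) {y₁ y₂ : X}
    (hne : y₁ ≠ y₂) :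
    ∃ o₁ o₂ : Set X, IsOpen o₁ ∧ IsOpen o₂ ∧ y₁ ∈ o₁ ∧ y₂ ∈ o₂ ∧
      Set.range g ∩ o₁ ∩ o₂ = ∅ := by
  have hF₁ : IsClosed (g ⁻¹' {y₁}) := (wh_singleton hX y₁).preimage hg
  have hF₂ : IsClosed (g ⁻¹' {y₂}) := (wh_singleton hX y₂).preimage hg
  have hdisj : Disjoint (g ⁻¹' {y₁}) (g ⁻¹' {y₂}) := by
    rw [Set.disjoint_left]
    rintro k hk1 hk2
    exact hne (by simpa using hk1.symm.trans (hk2 : g k = y₂))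
  obtain ⟨U, V, hU, hV, hFU, hFV, hUV⟩ := NormalSpace.normal _ _ hF₁ hF₂ hdisj
  refine ⟨(g '' Uᶜ)ᶜ, (g '' Vᶜ)ᶜ, (wh_image_closed hX hg hU.isClosed_compl).isOpen_compl,
    (wh_image_closed hX hg hV.isClosed_compl).isOpen_compl, ?_, ?_, ?_⟩
  · rintro ⟨k, hk, hgk⟩
    exact hk (hFU (by simp [hgk]))
  · rintro ⟨k, hk, hgk⟩
    exact hk (hFV (by simp [hgk]))
  · ext y
    simp only [Set.mem_inter_iff, Set.mem_empty_iff_false, iff_false, not_and,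
      Set.mem_compl_iff, Set.mem_range]
    rintro ⟨⟨k, rfl⟩, h1⟩ h2
    exact Set.disjoint_left.mp hUV
      (by by_contra h; exact h1 ⟨k, h, rfl⟩)
      (by by_contra h; exact h2 ⟨k, h, rfl⟩)

/-- Equalizers of maps from compact Hausdorff spaces into weak Hausdorff spaces
are closed. -/
lemma wh_eqSet_closed (hX : IsWeakHausdorff X) {M : Type} [TopologicalSpace M]
    [CompactSpace M] [T2Space M] {g h : M → X} (hg : Continuous g)
    (hh : Continuous h) : IsClosed {m | g m = h m} := by
  rw [← isOpen_compl_iff]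
  rw [isOpen_iff_forall_mem_open]
  intro m hm
  have hne : g m ≠ h m := hm
  obtain ⟨o₁, o₂, ho₁, ho₂, hm₁, hm₂, hdis⟩ :=
    wh_sep hX (hg.sumElim hh : Continuous (Sum.elim g h : M ⊕ M → X)) hne
  refine ⟨g ⁻¹' o₁ ∩ h ⁻¹' o₂, ?_, (ho₁.preimage hg).inter (ho₂.preimage hh),
    ⟨hm₁, hm₂⟩⟩
  rintro m' ⟨h1, h2⟩ (heq : g m' = h m')
  have : g m' ∈ Set.range (Sum.elim g h : M ⊕ M → X) ∩ o₁ ∩ o₂ :=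
    ⟨⟨⟨Sum.inl m', rfl⟩, h1⟩, heq ▸ h2⟩
  rw [hdis] at this
  exact this

/-- The image of a compact Hausdorff probe in a weak Hausdorff space is a Hausdorff
subspace. -/
lemma wh_range_t2 (hX : IsWeakHausdorff X) {K : Type} [TopologicalSpace K]
    [CompactSpace K] [T2Space K] {g : K → X} (hg : Continuous g) :
    T2Space (Set.range g) := by
  constructor
  rintro ⟨y₁, hy₁⟩ ⟨y₂, hy₂⟩ hne
  have hne' : y₁ ≠ y₂ := fun h => hne (by simpa using h)
  obtain ⟨o₁, o₂, ho₁, ho₂, hm₁, hm₂, hdis⟩ := wh_sep hX hg hne'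
  refine ⟨Subtype.val ⁻¹' o₁, Subtype.val ⁻¹' o₂, ho₁.preimage continuous_subtype_val,
    ho₂.preimage continuous_subtype_val, hm₁, hm₂, ?_⟩
  rw [Set.disjoint_left]
  rintro ⟨y, hy⟩ h1 h2
  have : y ∈ Set.range g ∩ o₁ ∩ o₂ := ⟨⟨hy, h1⟩, h2⟩
  rw [hdis] at this
  exact this

end WH

section Pushout

variable {A X B : Type} [TopologicalSpace A] [TopologicalSpace X] [TopologicalSpace B]
variable (f : C(A, X)) (i : C(A, B))

/-- The explicit form of the equivalence relation generated by `f a ∼ i a`. -/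
def PS : X ⊕ B → X ⊕ B → Prop
  | Sum.inl x, Sum.inl x' => x = x'
  | Sum.inl x, Sum.inr b => ∃ a, f a = x ∧ i a = b
  | Sum.inr b, Sum.inl x => ∃ a, f a = x ∧ i a = b
  | Sum.inr b, Sum.inr b' => b = b' ∨ ∃ a a', i a = b ∧ i a' = b' ∧ f a = f a'

lemma ps_refl (u : X ⊕ B) : PS f i u u := by
  cases u with
  | inl x => exact rfl
  | inr b => exact Or.inl rfl

lemma ps_symm : ∀ {u v : X ⊕ B}, PS f i u v → PS f i v u := by
  rintro (x | b) (x' | b') h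
  · exact h.symm
  · exact h
  · exact h
  · rcases h with h | ⟨a, a', h1, h2, h3⟩
    · exact Or.inl h.symm
    · exact Or.inr ⟨a', a, h2, h1, h3.symm⟩

lemma ps_trans (hii : Function.Injective i) :
    ∀ {u v w : X ⊕ B}, PS f i u v → PS f i v w → PS f i u w := by
  rintro (x | b) (x' | b') (x'' | b'') h1 h2
  · exact h1.trans h2
  · subst h1; exact h2
  · obtain ⟨a, hfa, hia⟩ := h1
    obtain ⟨a', hfa', hia'⟩ := h2
    have : a = a' := hii (hia.trans hia'.symm)
    subst this
    exact hfa.symm.trans hfa'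
  · obtain ⟨a, hfa, hia⟩ := h1
    rcases h2 with h2 | ⟨a₂, a₂', h21, h22, h23⟩
    · exact ⟨a, hfa, hia.trans h2⟩
    · have : a₂ = a := hii (h21.trans hia.symm)
      subst this
      exact ⟨a₂', h23.symm.trans hfa, h22⟩
  · obtain ⟨a, hfa, hia⟩ := h1
    exact ⟨a, hfa.trans h2, hia⟩
  · obtain ⟨a, hfa, hia⟩ := h1
    obtain ⟨a', hfa', hia'⟩ := h2
    exact Or.inr ⟨a, a', hia, hia', hfa.trans hfa'.symm⟩
  · obtain ⟨a₃, hfa₃, hia₃⟩ := h2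
    rcases h1 with h1 | ⟨a, a', h11, h12, h13⟩
    · exact ⟨a₃, hfa₃, hia₃.trans h1.symm⟩
    · have : a₃ = a' := hii (hia₃.trans h12.symm)
      subst this
      exact ⟨a, h13.trans hfa₃, h11⟩
  · rcases h1 with h1 | ⟨a, a', h11, h12, h13⟩
    · rcases h2 with h2 | ⟨a₂, a₂', h21, h22, h23⟩
      · exact Or.inl (h1.trans h2)
      · exact Or.inr ⟨a₂, a₂', h1 ▸ h21, h22, h23⟩
    · rcases h2 with h2 | ⟨a₂, a₂', h21, h22, h23⟩
      · exact Or.inr ⟨a, a', h11, h2 ▸ h12, h13⟩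
      · have : a₂ = a' := hii (h21.trans h12.symm)
        subst this
        exact Or.inr ⟨a, a₂', h11, h22, h13.trans h23⟩

/-- The quotient map onto the pushout. -/
def pmk : X ⊕ B → PushoutSpace f i := Quot.mk _

lemma continuous_pmk : Continuous (pmk f i) := continuous_quot_mk

lemma isQuotientMap_pmk : IsQuotientMap (pmk f i) := isQuotientMap_quot_mk

lemma pmk_sound {a : A} : pmk f i (Sum.inl (f a)) = pmk f i (Sum.inr (i a)) :=
  Quot.sound ⟨a, rfl, rfl⟩

lemma pmk_eq (hii : Function.Injective i) {u v : X ⊕ B} :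
    pmk f i u = pmk f i v ↔ PS f i u v := by
  constructor
  · intro h
    have h' := Quot.eqvGen_exact h
    clear h
    induction h' with
    | rel u v huv =>
      obtain ⟨a, rfl, rfl⟩ := huv
      exact ⟨a, rfl, rfl⟩
    | refl u => exact ps_refl f i u
    | symm u v _ ih => exact ps_symm f i ih
    | trans u v w _ _ ih1 ih2 => exact ps_trans f i hii ih1 ih2
  · rintro h
    match u, v, h with
    | Sum.inl x, Sum.inl x', (h : x = x') => rw [h]
    | Sum.inl x, Sum.inr b, ⟨a, hfa, hia⟩ =>
      rw [← hfa, ← hia]; exact pmk_sound f i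
    | Sum.inr b, Sum.inl x, ⟨a, hfa, hia⟩ =>
      rw [← hfa, ← hia]; exact (pmk_sound f i).symm
    | Sum.inr b, Sum.inr b', Or.inl h => rw [h]
    | Sum.inr b, Sum.inr b', Or.inr ⟨a, a', h1, h2, h3⟩ =>
      rw [← h1, ← h2]
      exact (pmk_sound f i).symm.trans (h3 ▸ pmk_sound f i)

end Pushout

section Structure

variable {A X B : Type} [TopologicalSpace A] [TopologicalSpace X] [TopologicalSpace B]
variable (f : C(A, X)) (i : C(A, B))

/-- The canonical map `X → X ∪_A B`. -/
def jX : X → PushoutSpace f i := fun x => pmk f i (Sum.inl x)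

/-- The image of `X` in the pushout. -/
def YX : Set (PushoutSpace f i) := Set.range (jX f i)

lemma continuous_jX : Continuous (jX f i) :=
  (continuous_pmk f i).comp continuous_inl

lemma jX_injective (hii : Function.Injective i) : Function.Injective (jX f i) :=
  fun x x' h => ((pmk_eq f i hii).mp h : x = x')

lemma isClosedMap_jX (hi : IsClosedEmbedding i) : IsClosedMap (jX f i) := by
  intro F hF
  rw [← (isQuotientMap_pmk f i).isClosed_preimage, isClosed_sum_iff]
  constructor
  · have h1 : Sum.inl ⁻¹' (pmk f i ⁻¹' (jX f i '' F)) = F := by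
      ext x
      simp only [Set.mem_preimage, Set.mem_image]
      constructor
      · rintro ⟨x', hx', hx⟩
        exact ((pmk_eq f i hi.injective).mp hx : x' = x) ▸ hx'
      · intro hx; exact ⟨x, hx, rfl⟩
    rw [h1]; exact hF
  · have h2 : Sum.inr ⁻¹' (pmk f i ⁻¹' (jX f i '' F)) = i '' (f ⁻¹' F) := by
      ext b
      simp only [Set.mem_preimage, Set.mem_image]
      constructor
      · rintro ⟨x', hx', hx⟩
        obtain ⟨a, hfa, hia⟩ := (pmk_eq f i hi.injective).mp hx
        exact ⟨a, show f a ∈ F by rw [hfa]; exact hx', hia⟩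
      · rintro ⟨a, ha, hb⟩
        exact ⟨f a, ha, by rw [← hb]; exact pmk_sound f i⟩
    rw [h2]
    exact hi.isClosedMap _ (hF.preimage f.continuous)

lemma isClosedEmbedding_jX (hi : IsClosedEmbedding i) : IsClosedEmbedding (jX f i) :=
  IsClosedEmbedding.of_continuous_injective_isClosedMap (continuous_jX f i)
    (jX_injective f i hi.injective) (isClosedMap_jX f i hi)

lemma isClosed_YX (hi : IsClosedEmbedding i) : IsClosed (YX f i) :=
  (isClosedEmbedding_jX f i hi).isClosed_range

lemma mem_YX_inr (hii : Function.Injective i) {b : B} :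
    pmk f i (Sum.inr b) ∈ YX f i ↔ b ∈ Set.range i := by
  constructor
  · rintro ⟨x, hx⟩
    obtain ⟨a, _, hia⟩ := (pmk_eq f i hii).mp hx
    exact ⟨a, hia⟩
  · rintro ⟨a, rfl⟩
    exact ⟨f a, pmk_sound f i⟩

/-- The canonical map `B ∖ i(A) → X ∪_A B`. -/
def jB : ((Set.range i)ᶜ : Set B) → PushoutSpace f i := fun b => pmk f i (Sum.inr ↑b)

lemma continuous_jB : Continuous (jB f i) :=
  (continuous_pmk f i).comp (continuous_inr.comp continuous_subtype_val)

lemma jB_injective (hii : Function.Injective i) : Function.Injective (jB f i) := by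
  rintro ⟨b, hb⟩ ⟨b', hb'⟩ h
  rcases (pmk_eq f i hii).mp h with h | ⟨a, _, h1, _⟩
  · exact Subtype.ext h
  · exact absurd ⟨a, h1⟩ hb

lemma range_jB (hii : Function.Injective i) :
    Set.range (jB f i) = (YX f i)ᶜ := by
  ext y
  constructor
  · rintro ⟨⟨b, hb⟩, rfl⟩
    exact fun hmem => hb ((mem_YX_inr f i hii).mp hmem)
  · intro hy
    obtain ⟨u, rfl⟩ := Quot.exists_rep y
    cases u with
    | inl x => exact absurd ⟨x, rfl⟩ hy
    | inr b =>
      by_cases hb : b ∈ Set.range i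
      · exact absurd ((mem_YX_inr f i hii).mpr hb) hy
      · exact ⟨⟨b, hb⟩, rfl⟩

lemma isOpenMap_jB (hi : IsClosedEmbedding i) : IsOpenMap (jB f i) := by
  intro W hW
  obtain ⟨V, hV, rfl⟩ := isOpen_induced_iff.mp hW
  have himg : jB f i '' (Subtype.val ⁻¹' V) =
      pmk f i '' (Sum.inr '' (V ∩ (Set.range i)ᶜ)) := by
    ext y
    simp only [Set.mem_image, Set.mem_preimage, Set.mem_inter_iff, Set.mem_compl_iff]
    constructor
    · rintro ⟨⟨b, hb⟩, hbV, rfl⟩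
      exact ⟨Sum.inr b, ⟨b, ⟨hbV, hb⟩, rfl⟩, rfl⟩
    · rintro ⟨u, ⟨b, ⟨hbV, hb⟩, rfl⟩, rfl⟩
      exact ⟨⟨b, hb⟩, hbV, rfl⟩
  rw [himg]
  rw [← (isQuotientMap_pmk f i).isOpen_preimage, isOpen_sum_iff]
  set V' : Set B := V ∩ (Set.range i)ᶜ with hV'
  have hV'open : IsOpen V' := hV.inter (isOpen_compl_iff.mpr hi.isClosed_range)
  constructor
  · have h1 : Sum.inl ⁻¹' (pmk f i ⁻¹' (pmk f i '' (Sum.inr '' V'))) = ∅ := by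
      ext x
      simp only [Set.mem_preimage, Set.mem_image, Set.mem_empty_iff_false, iff_false]
      rintro ⟨u, ⟨b, hb, rfl⟩, hx⟩
      obtain ⟨a, _, hia⟩ := (pmk_eq f i hi.injective).mp hx
      exact hb.2 ⟨a, hia⟩
    rw [h1]; exact isOpen_empty
  · have h2 : Sum.inr ⁻¹' (pmk f i ⁻¹' (pmk f i '' (Sum.inr '' V'))) = V' := by
      ext b
      simp only [Set.mem_preimage, Set.mem_image]
      constructor
      · rintro ⟨u, ⟨b', hb', rfl⟩, hb⟩
        rcases (pmk_eq f i hi.injective).mp hb with h | ⟨a, _, h1, _⟩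
        · exact h ▸ hb'
        · exact absurd ⟨a, h1⟩ hb'.2
      · intro hb
        exact ⟨Sum.inr b, ⟨b, hb, rfl⟩, rfl⟩
    rw [h2]; exact hV'open

lemma isOpenEmbedding_jB (hi : IsClosedEmbedding i) : IsOpenEmbedding (jB f i) :=
  IsOpenEmbedding.of_continuous_injective_isOpenMap (continuous_jB f i)
    (jB_injective f i hi.injective) (isOpenMap_jB f i hi)

/-- Lift, through `jX`, of a map into the pushout on the preimage of `YX`. -/
noncomputable def liftX {M : Type} (w : M → PushoutSpace f i)
    (m : ↥(w ⁻¹' YX f i)) : X :=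
  (show w ↑m ∈ YX f i from m.2).choose

lemma jX_liftX {M : Type} (w : M → PushoutSpace f i) (m : ↥(w ⁻¹' YX f i)) :
    jX f i (liftX f i w m) = w ↑m :=
  (show w ↑m ∈ YX f i from m.2).choose_spec

lemma continuous_liftX (hi : IsClosedEmbedding i) {M : Type} [TopologicalSpace M]
    {w : M → PushoutSpace f i} (hw : Continuous w) :
    Continuous (liftX f i w) := by
  rw [(isClosedEmbedding_jX f i hi).isInducing.continuous_iff]
  have h : (jX f i) ∘ (liftX f i w) = w ∘ Subtype.val :=
    funext fun m => jX_liftX f i w m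
  rw [h]
  exact hw.comp continuous_subtype_val

/-- Lift, through `jB`, of a map into the pushout on the preimage of `YXᶜ`. -/
noncomputable def liftB {M : Type} (hii : Function.Injective i)
    (w : M → PushoutSpace f i) (m : ↥(w ⁻¹' (YX f i)ᶜ)) : ((Set.range i)ᶜ : Set B) :=
  (show w ↑m ∈ Set.range (jB f i) from by rw [range_jB f i hii]; exact m.2).choose

lemma jB_liftB {M : Type} (hii : Function.Injective i) (w : M → PushoutSpace f i)
    (m : ↥(w ⁻¹' (YX f i)ᶜ)) : jB f i (liftB f i hii w m) = w ↑m :=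
  (show w ↑m ∈ Set.range (jB f i) from by rw [range_jB f i hii]; exact m.2).choose_spec

lemma continuous_liftB (hi : IsClosedEmbedding i) {M : Type} [TopologicalSpace M]
    {w : M → PushoutSpace f i} (hw : Continuous w) :
    Continuous (liftB f i hi.injective w) := by
  rw [(isOpenEmbedding_jB f i hi).isInducing.continuous_iff]
  have h : (jB f i) ∘ (liftB f i hi.injective w) = w ∘ Subtype.val :=
    funext fun m => jB_liftB f i hi.injective w m
  rw [h]
  exact hw.comp continuous_subtype_val

end Structure

section Separation

variable {A X B : Type} [TopologicalSpace A] [TopologicalSpace X] [TopologicalSpace B]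
variable (f : C(A, X)) (i : C(A, B))

lemma isClosed_Fx (hXw : IsWeakHausdorff X) (hii : Function.Injective i) (b₀ : B) :
    IsClosed (f '' (i ⁻¹' {b₀})) := by
  by_cases hb : b₀ ∈ Set.range i
  · obtain ⟨a₀, rfl⟩ := hb
    have h : i ⁻¹' {i a₀} = {a₀} := by
      ext a; simp only [Set.mem_preimage, Set.mem_singleton_iff]
      exact ⟨fun h => hii h, fun h => by rw [h]⟩
    rw [h, Set.image_singleton]
    exact wh_singleton hXw _
  · have h : i ⁻¹' {b₀} = ∅ := by
      ext a; simp only [Set.mem_preimage, Set.mem_singleton_iff, Set.mem_empty_iff_false,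
        iff_false]
      exact fun h => hb ⟨a, h⟩
    rw [h, Set.image_empty]
    exact isClosed_empty

/-- The pushout of weak Hausdorff spaces along a closed embedding is T1. -/
lemma pushout_t1 (hXw : IsWeakHausdorff X) (hBw : IsWeakHausdorff B)
    (hi : IsClosedEmbedding i) (y : PushoutSpace f i) : IsClosed ({y} : Set (PushoutSpace f i)) := by
  obtain ⟨u, rfl⟩ := Quot.exists_rep y
  rw [← (isQuotientMap_pmk f i).isClosed_preimage, isClosed_sum_iff]
  cases u with
  | inl x =>
    constructor
    · have h1 : Sum.inl ⁻¹' (pmk f i ⁻¹' {Quot.mk _ (Sum.inl x)}) = {x} := by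
        ext x'
        simp only [Set.mem_preimage, Set.mem_singleton_iff]
        exact ⟨fun h => ((pmk_eq f i hi.injective).mp h : x' = x),
          fun h => by rw [h]; rfl⟩
      refine (congrArg IsClosed h1).mpr ?_; exact wh_singleton hXw x
    · have h2 : Sum.inr ⁻¹' (pmk f i ⁻¹' {Quot.mk _ (Sum.inl x)}) = i '' (f ⁻¹' {x}) := by
        ext b
        simp only [Set.mem_preimage, Set.mem_singleton_iff, Set.mem_image]
        constructor
        · intro h
          obtain ⟨a, hfa, hia⟩ := (pmk_eq f i hi.injective).mp h
          exact ⟨a, hfa, hia⟩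
        · rintro ⟨a, hfa, rfl⟩
          exact ((pmk_eq f i hi.injective).mpr ⟨a, hfa, rfl⟩ :
            pmk f i (Sum.inr (i a)) = pmk f i (Sum.inl x))
      refine (congrArg IsClosed h2).mpr ?_
      exact hi.isClosedMap _ ((wh_singleton hXw x).preimage f.continuous)
  | inr b₀ =>
    constructor
    · have h1 : Sum.inl ⁻¹' (pmk f i ⁻¹' {Quot.mk _ (Sum.inr b₀)}) = f '' (i ⁻¹' {b₀}) := by
        ext x
        simp only [Set.mem_preimage, Set.mem_singleton_iff, Set.mem_image]
        constructor
        · intro h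
          obtain ⟨a, hfa, hia⟩ := (pmk_eq f i hi.injective).mp h
          exact ⟨a, hia, hfa⟩
        · rintro ⟨a, hia, rfl⟩
          exact ((pmk_eq f i hi.injective).mpr ⟨a, rfl, hia⟩ :
            pmk f i (Sum.inl (f a)) = pmk f i (Sum.inr b₀))
      refine (congrArg IsClosed h1).mpr ?_; exact isClosed_Fx f i hXw hi.injective b₀
    · have h2 : Sum.inr ⁻¹' (pmk f i ⁻¹' {Quot.mk _ (Sum.inr b₀)}) =
          {b₀} ∪ i '' (f ⁻¹' (f '' (i ⁻¹' {b₀}))) := by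
        ext b
        simp only [Set.mem_preimage, Set.mem_singleton_iff, Set.mem_union, Set.mem_image]
        constructor
        · intro h
          rcases (pmk_eq f i hi.injective).mp h with h | ⟨a, a', h1, h2, h3⟩
          · exact Or.inl h
          · exact Or.inr ⟨a, ⟨a', h2, h3.symm⟩, h1⟩
        · rintro (rfl | ⟨a, ⟨a', ha', hfa⟩, rfl⟩)
          · exact ((pmk_eq f i hi.injective).mpr (ps_refl f i _) :
              pmk f i (Sum.inr b) = pmk f i (Sum.inr b))
          · exact ((pmk_eq f i hi.injective).mpr (Or.inr ⟨a, a', rfl, ha', hfa.symm⟩) :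
              pmk f i (Sum.inr (i a)) = pmk f i (Sum.inr b₀))
      refine (congrArg IsClosed h2).mpr ?_
      refine (wh_singleton hBw b₀).union (hi.isClosedMap _ ?_)
      exact (isClosed_Fx f i hXw hi.injective b₀).preimage f.continuous

lemma isClosed_f_ipreim (hXw : IsWeakHausdorff X) (hi : IsClosedEmbedding i)
    {T : Set B} (hTc : IsCompact T) (hT2 : T2Space ↥T) :
    IsClosed (f '' (i ⁻¹' T)) := by
  have hKc : IsCompact (i ⁻¹' T) := hi.isInducing.isCompact_preimage hi.isClosed_range hTc
  haveI : CompactSpace ↥(i ⁻¹' T) := isCompact_iff_compactSpace.mp hKc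
  haveI : T2Space ↥(i ⁻¹' T) := by
    refine T2Space.of_injective_continuous (f := fun a : ↥(i ⁻¹' T) => (⟨i ↑a, a.2⟩ : ↥T)) ?_ ?_
    · rintro ⟨a, ha⟩ ⟨a', ha'⟩ h
      exact Subtype.ext (hi.injective (by simpa using h))
    · exact Continuous.subtype_mk (hi.continuous.comp continuous_subtype_val) _
  have h := hXw ↥(i ⁻¹' T) inferInstance inferInstance inferInstance
    ⟨fun a => f ↑a, f.continuous.comp continuous_subtype_val⟩
  rw [Set.image_eq_range]
  exact h

/-- The image in the pushout of a compact Hausdorff subset of `B` is closed. -/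
lemma isClosed_pmk_inr_image (hXw : IsWeakHausdorff X) (hi : IsClosedEmbedding i)
    {T : Set B} (hTc : IsCompact T) (hTcl : IsClosed T) (hT2 : T2Space ↥T) :
    IsClosed (pmk f i '' (Sum.inr '' T)) := by
  rw [← (isQuotientMap_pmk f i).isClosed_preimage, isClosed_sum_iff]
  constructor
  · have h1 : Sum.inl ⁻¹' (pmk f i ⁻¹' (pmk f i '' (Sum.inr '' T))) = f '' (i ⁻¹' T) := by
      ext x
      simp only [Set.mem_preimage, Set.mem_image]
      constructor
      · rintro ⟨u, ⟨b, hb, rfl⟩, hx⟩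
        obtain ⟨a, hfa, hia⟩ := ps_symm f i ((pmk_eq f i hi.injective).mp hx)
        exact ⟨a, show i a ∈ T by rw [hia]; exact hb, hfa⟩
      · rintro ⟨a, ha, rfl⟩
        exact ⟨Sum.inr (i a), ⟨i a, ha, rfl⟩, (pmk_sound f i).symm⟩
    rw [h1]
    exact isClosed_f_ipreim f i hXw hi hTc hT2
  · have h2 : Sum.inr ⁻¹' (pmk f i ⁻¹' (pmk f i '' (Sum.inr '' T))) =
        T ∪ i '' (f ⁻¹' (f '' (i ⁻¹' T))) := by
      ext b
      simp only [Set.mem_preimage, Set.mem_image, Set.mem_union]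
      constructor
      · rintro ⟨u, ⟨b', hb', rfl⟩, hb⟩
        rcases (pmk_eq f i hi.injective).mp hb with h | ⟨a, a', h1, h2, h3⟩
        · exact Or.inl (h ▸ hb')
        · exact Or.inr ⟨a', ⟨a, show i a ∈ T by rw [h1]; exact hb', h3⟩, h2⟩
      · rintro (hb | ⟨a', ⟨a, ha, hfa⟩, rfl⟩)
        · exact ⟨Sum.inr b, ⟨b, hb, rfl⟩, rfl⟩
        · refine ⟨Sum.inr (i a), ⟨i a, ha, rfl⟩, ?_⟩
          exact (pmk_eq f i hi.injective).mpr (Or.inr ⟨a, a', rfl, rfl, hfa⟩)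
    rw [h2]
    refine hTcl.union (hi.isClosedMap _ ?_)
    exact (isClosed_f_ipreim f i hXw hi hTc hT2).preimage f.continuous

/-- The image in the pushout of a compact Hausdorff subset of `B` is a Hausdorff
subspace. -/
lemma t2_pmk_inr_image (hXw : IsWeakHausdorff X) (hBw : IsWeakHausdorff B)
    (hi : IsClosedEmbedding i) {T : Set B} (hTc : IsCompact T) (hTcl : IsClosed T)
    (hT2 : T2Space ↥T) :
    T2Space ↥(pmk f i '' (Sum.inr '' T)) := by
  haveI : CompactSpace ↥T := isCompact_iff_compactSpace.mp hTc
  haveI := hT2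
  constructor
  rintro ⟨y₁, hy₁⟩ ⟨y₂, hy₂⟩ hne
  have hne' : y₁ ≠ y₂ := fun h => hne (by simpa using h)
  set G := pmk f i '' (Sum.inr '' T) with hG
  -- fibres in T
  set F₁ : Set ↥T := {t | pmk f i (Sum.inr ↑t) = y₁} with hF₁
  set F₂ : Set ↥T := {t | pmk f i (Sum.inr ↑t) = y₂} with hF₂
  have hF₁c : IsClosed F₁ := (pushout_t1 f i hXw hBw hi y₁).preimage
    ((continuous_pmk f i).comp (continuous_inr.comp continuous_subtype_val))
  have hF₂c : IsClosed F₂ := (pushout_t1 f i hXw hBw hi y₂).preimage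
    ((continuous_pmk f i).comp (continuous_inr.comp continuous_subtype_val))
  have hdisj : Disjoint F₁ F₂ := by
    rw [Set.disjoint_left]
    rintro t h1 h2
    exact hne' (h1.symm.trans h2)
  obtain ⟨U, V, hU, hV, hFU, hFV, hUV⟩ := NormalSpace.normal _ _ hF₁c hF₂c hdisj
  -- closed images
  have key : ∀ W : Set ↥T, IsOpen W →
      IsClosed (pmk f i '' (Sum.inr '' (Subtype.val '' Wᶜ))) := by
    intro W hW
    have hWc : IsClosed (Wᶜ : Set ↥T) := hW.isClosed_compl
    have hsub : Subtype.val '' (Wᶜ : Set ↥T) ⊆ T := by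
      rintro b ⟨t, _, rfl⟩; exact t.2
    have hcpt : IsCompact (Subtype.val '' (Wᶜ : Set ↥T)) :=
      hWc.isCompact.image continuous_subtype_val
    have hcl : IsClosed (Subtype.val '' (Wᶜ : Set ↥T)) := by
      haveI : CompactSpace ↥(Wᶜ : Set ↥T) := isCompact_iff_compactSpace.mp hWc.isCompact
      have h := hBw ↥(Wᶜ : Set ↥T) inferInstance inferInstance inferInstance
        ⟨fun t => ((↑t : ↥T) : B),
          continuous_subtype_val.comp continuous_subtype_val⟩
      rw [Set.image_eq_range]
      exact h
    have ht2 : T2Space ↥(Subtype.val '' (Wᶜ : Set ↥T)) :=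
      T2Space.of_injective_continuous (Set.inclusion_injective hsub)
        (continuous_inclusion hsub)
    exact isClosed_pmk_inr_image f i hXw hi hcpt hcl ht2
  refine ⟨Subtype.val ⁻¹' (pmk f i '' (Sum.inr '' (Subtype.val '' Uᶜ)))ᶜ,
    Subtype.val ⁻¹' (pmk f i '' (Sum.inr '' (Subtype.val '' Vᶜ)))ᶜ,
    ((key U hU).isOpen_compl).preimage continuous_subtype_val,
    ((key V hV).isOpen_compl).preimage continuous_subtype_val, ?_, ?_, ?_⟩
  · rintro ⟨u, ⟨b, ⟨t, htU, rfl⟩, rfl⟩, hy⟩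
    exact htU (hFU (show t ∈ F₁ from hy))
  · rintro ⟨u, ⟨b, ⟨t, htV, rfl⟩, rfl⟩, hy⟩
    exact htV (hFV (show t ∈ F₂ from hy))
  · rw [Set.disjoint_left]
    rintro ⟨y, hy⟩ h1 h2
    obtain ⟨u, ⟨b, hbT, rfl⟩, rfl⟩ := hy
    set t : ↥T := ⟨b, hbT⟩ with ht
    have htU : t ∈ U := by
      by_contra h
      exact h1 ⟨Sum.inr b, ⟨b, ⟨t, h, rfl⟩, rfl⟩, rfl⟩
    have htV : t ∈ V := by
      by_contra h
      exact h2 ⟨Sum.inr b, ⟨b, ⟨t, h, rfl⟩, rfl⟩, rfl⟩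
    exact Set.disjoint_left.mp hUV htU htV

end Separation

section Crux

variable {A X B : Type} [TopologicalSpace A] [TopologicalSpace X] [TopologicalSpace B]
variable (f : C(A, X)) (i : C(A, B))

/-- Key lemma: the set where a `B`-valued map agrees (after inclusion into the pushout)
with an arbitrary map into the pushout is closed, for maps from a compact Hausdorff
space. -/
lemma cruxB (hXw : IsWeakHausdorff X) (hBw : IsWeakHausdorff B) (hi : IsClosedEmbedding i)
    {M : Type} [TopologicalSpace M] [CompactSpace M] [T2Space M]
    {v : M → B} (hv : Continuous v) {w : M → PushoutSpace f i} (hw : Continuous w) :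
    IsClosed {m | pmk f i (Sum.inr (v m)) = w m} := by
  set E : Set M := {m | pmk f i (Sum.inr (v m)) = w m} with hE
  -- the part where `v` lands in `i(A)` and `w` lands in the image of `X`
  set MAX : Set M := v ⁻¹' (Set.range i) ∩ w ⁻¹' (YX f i) with hMAX
  have hMAXc : IsClosed MAX :=
    (hi.isClosed_range.preimage hv).inter ((isClosed_YX f i hi).preimage hw)
  haveI : CompactSpace ↥MAX := isCompact_iff_compactSpace.mp hMAXc.isCompact
  -- the lift of `v` to `A` on `MAX`
  have hvmem : ∀ m : ↥MAX, v ↑m ∈ Set.range i := fun m => m.2.1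
  set ai : ↥MAX → A := fun m => (hvmem m).choose with hai
  have hai_spec : ∀ m : ↥MAX, i (ai m) = v ↑m := fun m => (hvmem m).choose_spec
  have hai_cont : Continuous ai := by
    rw [hi.isInducing.continuous_iff]
    have h : (⇑i) ∘ ai = v ∘ Subtype.val := funext fun m => hai_spec m
    rw [h]
    exact hv.comp continuous_subtype_val
  set g₁ : ↥MAX → X := fun m => f (ai m) with hg₁
  have hg₁_cont : Continuous g₁ := f.continuous.comp hai_cont
  set g₂ : ↥MAX → X := fun m => liftX f i w ⟨↑m, m.2.2⟩ with hg₂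
  have hg₂_cont : Continuous g₂ :=
    (continuous_liftX f i hi hw).comp (continuous_subtype_val.subtype_mk _)
  have hg₂_spec : ∀ m : ↥MAX, jX f i (g₂ m) = w ↑m := fun m =>
    jX_liftX f i w ⟨↑m, m.2.2⟩
  set E₁ : Set M := Subtype.val '' {m : ↥MAX | g₁ m = g₂ m} with hE₁
  have hE₁c : IsClosed E₁ :=
    hMAXc.isClosedEmbedding_subtypeVal.isClosedMap _
      (wh_eqSet_closed hXw hg₁_cont hg₂_cont)
  -- the part where `w` lands outside the image of `X`
  set O : Set M := w ⁻¹' (YX f i)ᶜ with hO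
  set lB : ↥O → B := fun m => ↑(liftB f i hi.injective w m) with hlB
  have hlB_cont : Continuous lB :=
    continuous_subtype_val.comp (continuous_liftB f i hi hw)
  have hlB_spec : ∀ m : ↥O, pmk f i (Sum.inr (lB m)) = w ↑m := fun m =>
    jB_liftB f i hi.injective w m
  have hlB_not : ∀ m : ↥O, lB m ∉ Set.range i := fun m =>
    (liftB f i hi.injective w m).2
  set EB : Set M := Subtype.val '' {m : ↥O | v ↑m = lB m} with hEB
  -- inclusions
  have hEB_sub_E : EB ⊆ E := by
    rintro _ ⟨m, hm, rfl⟩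
    show pmk f i (Sum.inr (v ↑m)) = w ↑m
    rw [show v ↑m = lB m from hm]
    exact hlB_spec m
  have hE₁_sub_E : E₁ ⊆ E := by
    rintro _ ⟨m, hm, rfl⟩
    show pmk f i (Sum.inr (v ↑m)) = w ↑m
    rw [← hai_spec m, ← hg₂_spec m, ← (hm : g₁ m = g₂ m)]
    exact (pmk_eq f i hi.injective).mpr ⟨ai m, rfl, rfl⟩
  have hE_sub : E ⊆ E₁ ∪ EB := by
    intro m hm
    have hm' : pmk f i (Sum.inr (v m)) = w m := hm
    by_cases hvm : v m ∈ Set.range i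
    · left
      have hwm : w m ∈ YX f i := by
        rw [← hm']
        exact (mem_YX_inr f i hi.injective).mpr hvm
      refine ⟨⟨m, hvm, hwm⟩, ?_, rfl⟩
      show g₁ ⟨m, hvm, hwm⟩ = g₂ ⟨m, hvm, hwm⟩
      apply jX_injective f i hi.injective
      rw [hg₂_spec ⟨m, hvm, hwm⟩]
      show pmk f i (Sum.inl (f (ai ⟨m, hvm, hwm⟩))) = w m
      rw [← hm']
      refine (pmk_eq f i hi.injective).mpr ⟨ai ⟨m, hvm, hwm⟩, rfl, ?_⟩
      exact hai_spec ⟨m, hvm, hwm⟩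
    · right
      have hwm : w m ∈ (YX f i)ᶜ := by
        intro hmem
        rw [← hm'] at hmem
        exact hvm ((mem_YX_inr f i hi.injective).mp hmem)
      refine ⟨⟨m, hwm⟩, ?_, rfl⟩
      show v m = lB ⟨m, hwm⟩
      have h : pmk f i (Sum.inr (v m)) = pmk f i (Sum.inr (lB ⟨m, hwm⟩)) := by
        rw [hlB_spec ⟨m, hwm⟩]; exact hm'
      rcases (pmk_eq f i hi.injective).mp h with h | ⟨a, _, h1, _⟩
      · exact h
      · exact absurd ⟨a, h1⟩ hvm
  -- the closure of `EB` is contained in `E`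
  set D : Set M := closure EB with hD
  have hDc : IsClosed D := isClosed_closure
  haveI : CompactSpace ↥D := isCompact_iff_compactSpace.mp hDc.isCompact
  set T : Set B := v '' D with hT
  have hTc : IsCompact T := hDc.isCompact.image hv
  have hTcl : IsClosed T := by
    have h := hBw ↥D inferInstance inferInstance inferInstance
      ⟨fun d => v ↑d, hv.comp continuous_subtype_val⟩
    rw [hT, Set.image_eq_range]
    exact h
  have hT2 : T2Space ↥T := by
    rw [hT, Set.image_eq_range]
    exact wh_range_t2 hBw (hv.comp continuous_subtype_val)
  set G : Set (PushoutSpace f i) := pmk f i '' (Sum.inr '' T) with hG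
  have hGcl : IsClosed G := isClosed_pmk_inr_image f i hXw hi hTc hTcl hT2
  haveI hGt2 : T2Space ↥G := t2_pmk_inr_image f i hXw hBw hi hTc hTcl hT2
  have hvD : ∀ m ∈ D, pmk f i (Sum.inr (v m)) ∈ G := by
    intro m hm
    exact ⟨Sum.inr (v m), ⟨v m, ⟨m, hm, rfl⟩, rfl⟩, rfl⟩
  have hwD : ∀ m ∈ D, w m ∈ G := by
    have h1 : w '' EB ⊆ G := by
      rintro _ ⟨m, hm, rfl⟩
      exact ⟨Sum.inr (v m), ⟨v m, ⟨m, subset_closure hm, rfl⟩, rfl⟩, hEB_sub_E hm⟩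
    intro m hm
    have h2 : w m ∈ closure (w '' EB) := image_closure_subset_closure_image hw ⟨m, hm, rfl⟩
    have h3 : closure (w '' EB) ⊆ G := by
      rw [← hGcl.closure_eq]; exact closure_mono h1
    exact h3 h2
  have hD_sub_E : D ⊆ E := by
    intro m hm
    set φ : ↥D → ↥G := fun d => ⟨w ↑d, hwD ↑d d.2⟩ with hφ
    set ψ : ↥D → ↥G := fun d => ⟨pmk f i (Sum.inr (v ↑d)), hvD ↑d d.2⟩ with hψ
    have hφc : Continuous φ := (hw.comp continuous_subtype_val).subtype_mk _
    have hψc : Continuous ψ :=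
      ((continuous_pmk f i).comp
        (continuous_inr.comp (hv.comp continuous_subtype_val))).subtype_mk _
    have heq : Set.EqOn φ ψ (Subtype.val ⁻¹' EB) := by
      rintro d hd
      apply Subtype.ext
      exact (hEB_sub_E hd).symm
    have hdense : ∀ d : ↥D, d ∈ closure (Subtype.val ⁻¹' EB : Set ↥D) := by
      intro d
      rw [closure_subtype]
      have himg : (Subtype.val '' (Subtype.val ⁻¹' EB : Set ↥D)) = EB := by
        rw [Set.image_preimage_eq_inter_range, Subtype.range_coe]
        exact Set.inter_eq_self_of_subset_left subset_closure
      rw [himg]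
      exact d.2
    have hext := (heq.closure hφc hψc) (hdense ⟨m, hm⟩)
    have h' : w m = pmk f i (Sum.inr (v m)) := Subtype.ext_iff.mp hext
    exact h'.symm
  have hfinal : E = E₁ ∪ D := by
    apply Set.Subset.antisymm
    · exact hE_sub.trans (Set.union_subset_union_right E₁ subset_closure)
    · exact Set.union_subset hE₁_sub_E hD_sub_E
  rw [hfinal]
  exact hE₁c.union hDc

end Crux

/-- If `A`, `X`, `B` are compactly generated weak Hausdorff and `i : A → B` is a
closed embedding, then the pushout `X ∪_A B`, computed in the category of all
topological spaces, is again weak Hausdorff and compactly generated (hence agrees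
with the pushout computed in CGWH spaces). -/
theorem stmt17 {A X B : Type} [TopologicalSpace A] [TopologicalSpace X]
    [TopologicalSpace B]
    (hA : IsWeakHausdorff A ∧ IsCompactlyGeneratedSpace A)
    (hX : IsWeakHausdorff X ∧ IsCompactlyGeneratedSpace X)
    (hB : IsWeakHausdorff B ∧ IsCompactlyGeneratedSpace B)
    (f : C(A, X)) (i : C(A, B)) (hi : IsClosedEmbedding i) :
    IsWeakHausdorff (PushoutSpace f i) ∧ IsCompactlyGeneratedSpace (PushoutSpace f i) := by
  obtain ⟨hXw, hXc⟩ := hX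
  obtain ⟨hBw, hBc⟩ := hB
  constructor
  · -- weak Hausdorff
    intro K _tK hKc hKt2 u
    haveI := hKc
    haveI := hKt2
    have hq : Set.range ⇑u = pmk f i '' (pmk f i ⁻¹' Set.range ⇑u) :=
      (Set.image_preimage_eq_of_subset (by
        intro y _
        obtain ⟨z, rfl⟩ := Quot.exists_rep y
        exact ⟨z, rfl⟩)).symm
    rw [← (isQuotientMap_pmk f i).isClosed_preimage, isClosed_sum_iff]
    constructor
    · -- the preimage in `X` is the range of the lift of `u` on `u ⁻¹' YX`
      have hKX : IsClosed (⇑u ⁻¹' YX f i) := (isClosed_YX f i hi).preimage u.continuous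
      haveI : CompactSpace ↥(⇑u ⁻¹' YX f i) := isCompact_iff_compactSpace.mp hKX.isCompact
      have hset : Sum.inl ⁻¹' (pmk f i ⁻¹' Set.range ⇑u) =
          Set.range (liftX f i ⇑u) := by
        ext x
        simp only [Set.mem_preimage, Set.mem_range]
        constructor
        · rintro ⟨k, hk⟩
          have hkY : k ∈ ⇑u ⁻¹' YX f i := ⟨x, hk.symm⟩
          refine ⟨⟨k, hkY⟩, ?_⟩
          apply jX_injective f i hi.injective
          rw [jX_liftX f i ⇑u ⟨k, hkY⟩]
          exact hk
        · rintro ⟨m, rfl⟩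
          exact ⟨↑m, (jX_liftX f i ⇑u m).symm⟩
      rw [hset]
      exact hXw ↥(⇑u ⁻¹' YX f i) inferInstance inferInstance inferInstance
        ⟨liftX f i ⇑u, continuous_liftX f i hi u.continuous⟩
    · -- the preimage in `B` is closed because `B` is compactly generated
      apply hBc
      intro L _tL hLc hLt2 g
      haveI := hLc
      haveI := hLt2
      set Z : Set (L × K) := {p | pmk f i (Sum.inr (g p.1)) = u p.2} with hZ
      have hZc : IsClosed Z :=
        cruxB f i hXw hBw hi (g.continuous.comp continuous_fst)
          (u.continuous.comp continuous_snd)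
      have hset : ⇑g ⁻¹' (Sum.inr ⁻¹' (pmk f i ⁻¹' Set.range ⇑u)) = Prod.fst '' Z := by
        ext l
        simp only [Set.mem_preimage, Set.mem_range, Set.mem_image]
        constructor
        · rintro ⟨k, hk⟩
          exact ⟨(l, k), hk.symm, rfl⟩
        · rintro ⟨⟨l', k⟩, hp, rfl⟩
          exact ⟨k, hp.symm⟩
      rw [hset]
      exact isClosedMap_fst_of_compactSpace _ hZc
  · -- compactly generated
    intro s hs
    rw [← (isQuotientMap_pmk f i).isClosed_preimage, isClosed_sum_iff]
    constructor
    · apply hXc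
      intro L _tL hLc hLt2 g
      haveI := hLc
      haveI := hLt2
      exact hs L inferInstance inferInstance inferInstance
        ⟨fun l => pmk f i (Sum.inl (g l)),
          (continuous_pmk f i).comp (continuous_inl.comp g.continuous)⟩
    · apply hBc
      intro L _tL hLc hLt2 g
      haveI := hLc
      haveI := hLt2
      exact hs L inferInstance inferInstance inferInstance
        ⟨fun l => pmk f i (Sum.inr (g l)),
          (continuous_pmk f i).comp (continuous_inr.comp g.continuous)⟩
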